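/- Let m ≥ 1 and consider the uniform distribution over {0,1}-labelings of T^m_1. Then for every integer x: Pr(M^m_1 < x) = 0 if x ≤ m; Pr(M^m_1 < x) = (C(2m, m) + 2·∑_{i=m+1}^{x−1} C(2m, i)) / 2^{2m} if m < x ≤ 2m + 1; and Pr(M^m_1 < x) = 1 if x > 2m + 1. -/

import Mathlib

namespace TreeDB

/-- The sample space of `{0,1}`-labelings of the tree `T^m_n` (the rooted
tree whose root has `2m` children, each of which is the root of a full
binary tree of depth `n-1`): a labeling consists of the label of the root
together with, for each of the `2m` children, a labeling of the full binary
tree of depth `n-1` rooted at that child.  That binary tree has `2^n - 1`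
vertices, stored in heap order: the vertex with heap index `h ∈ [1, 2^n - 1]`
(root `1`, children of `h` being `2h` and `2h+1`) is stored at position
`h - 1`. -/
abbrev Ω (m n : ℕ) : Type := Bool × (Fin (2 * m) → Fin (2 ^ n - 1) → Bool)

/-- The heap index of the vertex of a full binary tree reached from the root
by the descent `p` (`false` = left, `true` = right). -/
def heapIdx (p : List Bool) : ℕ := p.foldl (fun h b => 2 * h + b.toNat) 1

/-- The label of the vertex with heap index `h` in a heap-stored labeled
full binary tree `g`. -/
def sub {N : ℕ} (g : Fin N → Bool) (h : ℕ) : Bool :=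
  if hh : h - 1 < N then g ⟨h - 1, hh⟩ else false

/-- The sequence of the `n` labels read along the first `n` vertices of the
root-to-leaf path of the heap-stored labeled full binary tree `g`
determined by the descent `p`. -/
def pathLabels {N : ℕ} (n : ℕ) (g : Fin N → Bool) (p : List Bool) : List Bool :=
  (List.range n).map fun j => sub g (heapIdx (p.take j))

/-- `occ ℓ t` is the number of root-to-leaf paths `w_0 w_1 … w_n` of `T^m_n`
with `ℓ(w_j) = t_j` for all `j`, for a labeling `ℓ` of `T^m_n` and a
sequence `t = t_0 t_1 … t_n ∈ {0,1}^{n+1}`.  A root-to-leaf path consists of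
the root, a child `i` of the root, and a descent `p ∈ {0,1}^{n-1}` in the
full binary tree of depth `n-1` rooted at that child. -/
def occ {m n : ℕ} (ℓ : Ω m n) (t : List Bool) : ℕ :=
  match t with
  | [] => 0
  | t0 :: ts =>
      if ℓ.1 = t0 then
        ∑ i : Fin (2 * m), ∑ p : Fin (n - 1) → Bool,
          if pathLabels n (ℓ.2 i) (List.ofFn p) = ts then 1 else 0
      else 0

/-- The random variable `M^m_n`: the maximum over `t ∈ {0,1}^{n+1}` of
`occ ℓ t`. -/
def Mval {m n : ℕ} (ℓ : Ω m n) : ℕ :=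
  Finset.univ.sup fun t : Fin (n + 1) → Bool => occ ℓ (List.ofFn t)

/-- The probability of the event `P` under the uniform distribution over
`{0,1}`-labelings of `T^m_n`. -/
def Pr (m n : ℕ) (P : Ω m n → Prop) [DecidablePred P] : ℚ :=
  ((Finset.univ.filter P).card : ℚ) / (Fintype.card (Ω m n) : ℚ)

/-- The expectation of `f` under the uniform distribution over
`{0,1}`-labelings of `T^m_n`. -/
def Exp (m n : ℕ) (f : Ω m n → ℕ) : ℚ :=
  (∑ ℓ : Ω m n, (f ℓ : ℚ)) / (Fintype.card (Ω m n) : ℚ)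

/-- The labeled full binary tree of depth `n - 2` rooted at the left
(`s = false`) or right (`s = true`) child of the root of the heap-stored
labeled full binary tree `g` of depth `n - 1`. -/
def childSub {n : ℕ} (g : Fin (2 ^ n - 1) → Bool) (s : Bool) :
    Fin (2 ^ (n - 1) - 1) → Bool :=
  fun h => sub g ((h.val + 1) + (1 + s.toNat) * 2 ^ Nat.log2 (h.val + 1))

end TreeDB

namespace TreeDB

def cnt {m : ℕ} (ℓ : Ω m 1) (b : Bool) : ℕ :=
  (Finset.univ.filter fun i : Fin (2 * m) => ℓ.2 i ⟨0, by norm_num⟩ = b).card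

lemma occ_eq {m : ℕ} (ℓ : Ω m 1) (t : Fin 2 → Bool) :
    occ ℓ (List.ofFn t) = if ℓ.1 = t 0 then cnt ℓ (t 1) else 0 := by
  have h : List.ofFn t = [t 0, t 1] := by
    simp [List.ofFn_succ]
  rw [h]
  simp only [occ, cnt]
  split
  · rw [Finset.card_filter]
    congr 1
    ext i
    have hp : ∀ p : Fin (1-1) → Bool,
        pathLabels 1 (ℓ.2 i) (List.ofFn p) = [ℓ.2 i ⟨0, by norm_num⟩] := by
      intro p
      simp [pathLabels, List.range_succ, heapIdx, sub]
    simp only [hp]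
    rw [Finset.sum_const]
    have hcard : Fintype.card (Fin (1-1) → Bool) = 1 := by
      simp [Fintype.card_fun]
    rw [Finset.card_univ, hcard]
    simp
  · rfl

lemma mval_eq {m : ℕ} (ℓ : Ω m 1) :
    Mval ℓ = max (cnt ℓ true) (cnt ℓ false) := by
  apply le_antisymm
  · apply Finset.sup_le
    intro t _
    rw [occ_eq]
    split
    · cases t 1 <;> simp
    · simp
  · have key : ∀ b, cnt ℓ b ≤ Mval ℓ := by
      intro b
      have h1 : occ ℓ (List.ofFn ![ℓ.1, b]) = cnt ℓ b := by rw [occ_eq]; simp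
      rw [← h1]
      exact Finset.le_sup (f := fun t : Fin 2 → Bool => occ ℓ (List.ofFn t)) (Finset.mem_univ ![ℓ.1, b])
    exact max_le (key true) (key false)

lemma cnt_add {m : ℕ} (ℓ : Ω m 1) : cnt ℓ true + cnt ℓ false = 2 * m := by
  unfold cnt
  have h2 : ∀ i : Fin (2*m), (ℓ.2 i ⟨0, by norm_num⟩ = false) ↔ ¬ (ℓ.2 i ⟨0, by norm_num⟩ = true) := by
    intro i; cases hq : ℓ.2 i ⟨0, by norm_num⟩ <;> simp
  simp only [h2]
  rw [Finset.card_filter_add_card_filter_not]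
  simp

lemma count_finsets (N : ℕ) (Q : ℕ → Prop) [DecidablePred Q] :
    (Finset.univ.filter fun s : Finset (Fin N) => Q s.card).card
      = ∑ k ∈ Finset.range (N + 1), if Q k then Nat.choose N k else 0 := by
  rw [Finset.card_filter]
  rw [← Finset.powerset_univ]
  rw [Finset.sum_powerset_apply_card (fun k => if Q k then 1 else 0)]
  simp only [Finset.card_univ, Fintype.card_fin, smul_eq_mul]
  refine Finset.sum_congr rfl fun k _ => ?_
  split <;> simp

lemma count_boolfun (N : ℕ) (Q : ℕ → Prop) [DecidablePred Q] :
    (Finset.univ.filter fun f : Fin N → Bool =>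
        Q (Finset.univ.filter fun i => f i = true).card).card
      = ∑ k ∈ Finset.range (N + 1), if Q k then Nat.choose N k else 0 := by
  rw [← count_finsets N Q]
  apply Finset.card_bij (fun f _ => Finset.univ.filter fun i => f i = true)
  · intro f hf
    simpa using (Finset.mem_filter.1 hf).2
  · intro f hf g hg hfg
    funext i
    have := Finset.ext_iff.1 hfg i
    simp only [Finset.mem_filter, Finset.mem_univ, true_and] at this
    cases hgi : g i <;> cases hfi : f i <;> simp_all
  · intro s hs
    refine ⟨fun i => decide (i ∈ s), ?_, ?_⟩
    · simp only [Finset.mem_filter, Finset.mem_univ, true_and] at hs ⊢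
      convert hs using 2
      ext i; simp
    · ext i; simp

lemma count_omega (m : ℕ) (Q : ℕ → Prop) [DecidablePred Q] :
    (Finset.univ.filter fun ℓ : Ω m 1 => Q (cnt ℓ true)).card
      = 2 * ∑ k ∈ Finset.range (2 * m + 1), if Q k then Nat.choose (2 * m) k else 0 := by
  rw [← count_boolfun (2 * m) Q]
  rw [Finset.card_filter]
  rw [Fintype.sum_prod_type]
  have hb : ∀ b : Bool, (∑ g : Fin (2 * m) → Fin (2 ^ 1 - 1) → Bool,
      if Q (cnt (b, g) true) then 1 else 0)
      = (Finset.univ.filter fun f : Fin (2 * m) → Bool =>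
          Q (Finset.univ.filter fun i => f i = true).card).card := by
    intro b
    rw [Finset.card_filter]
    apply Fintype.sum_bijective (fun g : Fin (2 * m) → Fin (2 ^ 1 - 1) → Bool =>
      fun i => g i ⟨0, by norm_num⟩)
    · constructor
      · intro g g' h
        funext i j
        have hj : j = ⟨0, by norm_num⟩ := by
          apply Fin.ext
          have := j.2
          omega
        rw [hj]
        exact congrFun h i
      · intro f
        exact ⟨fun i _ => f i, rfl⟩
    · intro g
      rfl
  rw [Fintype.sum_bool, hb, hb]
  ring

lemma cnt_le {m : ℕ} (ℓ : Ω m 1) (b : Bool) : cnt ℓ b ≤ 2 * m := by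
  have := Finset.card_filter_le (Finset.univ : Finset (Fin (2*m)))
    (fun i => ℓ.2 i ⟨0, by norm_num⟩ = b)
  simpa [cnt] using this

lemma filter_eq (m x : ℕ) :
    (Finset.univ.filter fun ℓ : Ω m 1 => Mval ℓ < x)
      = Finset.univ.filter fun ℓ : Ω m 1 => cnt ℓ true < x ∧ 2 * m - cnt ℓ true < x := by
  apply Finset.filter_congr
  intro ℓ _
  rw [mval_eq, max_lt_iff]
  have h1 := cnt_add ℓ
  constructor
  · rintro ⟨a, b⟩; exact ⟨a, by omega⟩
  · rintro ⟨a, b⟩; exact ⟨a, by omega⟩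

lemma card_omega (m : ℕ) : Fintype.card (Ω m 1) = 2 ^ (2 * m + 1) := by
  simp [Fintype.card_fun]
  ring


/-- let `m ≥ 1` and consider the uniform distribution over
`{0,1}`-labelings of `T^m_1`.  Then for every integer `x`:
`Pr(M^m_1 < x) = 0` if `x ≤ m`;
`Pr(M^m_1 < x) = (C(2m, m) + 2 ∑_{i=m+1}^{x-1} C(2m, i)) / 2^{2m}` if
`m < x ≤ 2m + 1`; and `Pr(M^m_1 < x) = 1` if `x > 2m + 1`. -/
theorem pr_mval_lt_depth_one (m : ℕ) (hm : 1 ≤ m) (x : ℕ) :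
    (x ≤ m → Pr m 1 (fun ℓ => Mval ℓ < x) = 0) ∧
    (m < x → x ≤ 2 * m + 1 →
      Pr m 1 (fun ℓ => Mval ℓ < x) =
        ((Nat.choose (2 * m) m : ℚ) +
          2 * ∑ i ∈ Finset.Icc (m + 1) (x - 1), (Nat.choose (2 * m) i : ℚ)) /
        2 ^ (2 * m)) ∧
    (2 * m + 1 < x → Pr m 1 (fun ℓ => Mval ℓ < x) = 1) := by
  have hcount : (Finset.univ.filter fun ℓ : Ω m 1 => Mval ℓ < x).card
      = 2 * ∑ k ∈ Finset.range (2 * m + 1),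
          if k < x ∧ 2 * m - k < x then Nat.choose (2 * m) k else 0 := by
    rw [filter_eq]
    exact count_omega m (fun k => k < x ∧ 2 * m - k < x)
  have hPr : Pr m 1 (fun ℓ => Mval ℓ < x)
      = (2 * ∑ k ∈ Finset.range (2 * m + 1),
          if k < x ∧ 2 * m - k < x then Nat.choose (2 * m) k else 0 : ℕ) / (2 ^ (2 * m + 1) : ℚ) := by
    rw [Pr, hcount, card_omega]
    norm_cast
  refine ⟨?_, ?_, ?_⟩
  · intro hx
    rw [hPr]
    have : ∀ k ∈ Finset.range (2 * m + 1),
        (if k < x ∧ 2 * m - k < x then Nat.choose (2 * m) k else 0) = 0 := by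
      intro k hk
      rw [if_neg]
      omega
    rw [Finset.sum_congr rfl this]
    simp
  · intro hx1 hx2
    rw [hPr]
    have hS : ∑ k ∈ Finset.range (2 * m + 1),
        (if k < x ∧ 2 * m - k < x then Nat.choose (2 * m) k else 0)
        = Nat.choose (2 * m) m + 2 * ∑ i ∈ Finset.Icc (m + 1) (x - 1), Nat.choose (2 * m) i := by
      rw [← Finset.sum_filter]
      have hset : (Finset.range (2 * m + 1)).filter (fun k => k < x ∧ 2 * m - k < x)
          = Finset.Ico (2 * m + 1 - x) x := by
        ext k
        simp only [Finset.mem_filter, Finset.mem_range, Finset.mem_Ico]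
        omega
      rw [hset]
      rw [← Finset.sum_Ico_consecutive (fun k => Nat.choose (2 * m) k)
        (show 2 * m + 1 - x ≤ m + 1 by omega) (show m + 1 ≤ x by omega)]
      have hrefl : ∑ k ∈ Finset.Ico (2 * m + 1 - x) (m + 1), Nat.choose (2 * m) k
          = ∑ j ∈ Finset.Ico m x, Nat.choose (2 * m) j := by
        apply Finset.sum_nbij' (i := fun k => 2 * m - k) (j := fun k => 2 * m - k)
        · intro k hk
          simp only [Finset.mem_Ico] at hk ⊢
          omega
        · intro k hk
          simp only [Finset.mem_Ico] at hk ⊢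
          omega
        · intro k hk
          simp only [Finset.mem_Ico] at hk
          omega
        · intro k hk
          simp only [Finset.mem_Ico] at hk
          omega
        · intro k hk
          simp only [Finset.mem_Ico] at hk
          rw [Nat.choose_symm (by omega)]
      rw [hrefl]
      rw [Finset.sum_eq_sum_Ico_succ_bot (by omega : m < x)]
      have hIcc : Finset.Icc (m + 1) (x - 1) = Finset.Ico (m + 1) x := by
        rw [← Finset.Ico_add_one_right_eq_Icc]
        congr 1
        omega
      rw [hIcc]
      ring
    rw [hS]
    push_cast
    rw [pow_succ]
    field_simp
  · intro hx
    rw [hPr]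
    have : ∀ k ∈ Finset.range (2 * m + 1),
        (if k < x ∧ 2 * m - k < x then Nat.choose (2 * m) k else 0) = Nat.choose (2 * m) k := by
      intro k hk
      rw [if_pos]
      simp only [Finset.mem_range] at hk
      omega
    rw [Finset.sum_congr rfl this, Nat.sum_range_choose]
    push_cast
    rw [pow_succ]
    field_simp


end TreeDB
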